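/- Suppose T : X → X̃ and S : Y → Ỹ are bounded linear operators between Banach spaces that are equivalent after extension, i.e., there are Banach spaces X₀, Y₀ and invertible bounded linear operators E : Ỹ ⊕ Y₀ → X̃ ⊕ X₀ and F : X ⊕ X₀ → Y ⊕ Y₀ with (T ⊕ I_{X₀}) = E (S ⊕ I_{Y₀}) F. Then the kernel of T is isomorphic (as a topological vector space) to the kernel of S. -/

import Mathlib

/-- If `T` and `S` are equivalent after extension, i.e. `T ⊕ I = E (S ⊕ I) F` with `E, F`
invertible bounded operators, then `ker T` and `ker S` are isomorphic as topological
vector spaces. -/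
theorem eae_ker_iso {X X' Y Y' X₀ Y₀ : Type*} [NormedAddCommGroup X] [NormedSpace ℂ X] [CompleteSpace X] [NormedAddCommGroup X'] [NormedSpace ℂ X'] [CompleteSpace X'] [NormedAddCommGroup Y] [NormedSpace ℂ Y] [CompleteSpace Y] [NormedAddCommGroup Y'] [NormedSpace ℂ Y'] [CompleteSpace Y'] [NormedAddCommGroup X₀] [NormedSpace ℂ X₀] [CompleteSpace X₀] [NormedAddCommGroup Y₀] [NormedSpace ℂ Y₀] [CompleteSpace Y₀]
    (T : X →L[ℂ] X') (S : Y →L[ℂ] Y')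
    (E : (Y' × Y₀) ≃L[ℂ] (X' × X₀)) (F : (X × X₀) ≃L[ℂ] (Y × Y₀))
    (h : T.prodMap (ContinuousLinearMap.id ℂ X₀) =
      (E : (Y' × Y₀) →L[ℂ] (X' × X₀)) ∘L
        (S.prodMap (ContinuousLinearMap.id ℂ Y₀)) ∘L (F : (X × X₀) →L[ℂ] (Y × Y₀))) :
    Nonempty ((LinearMap.ker (T : X →ₗ[ℂ] X')) ≃L[ℂ] (LinearMap.ker (S : Y →ₗ[ℂ] Y'))) := by
  have key : ∀ v : X × X₀, T.prodMap (ContinuousLinearMap.id ℂ X₀) v = 0 ↔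
      S.prodMap (ContinuousLinearMap.id ℂ Y₀) (F v) = 0 := by
    intro v
    rw [h]
    simp only [ContinuousLinearMap.comp_apply, ContinuousLinearMap.coe_coe]
    constructor
    · intro hv
      exact E.injective (by simpa using hv)
    · intro hv
      simp [hv]
  have fwd : ∀ x : LinearMap.ker (T : X →ₗ[ℂ] X'),
      S ((F ((x : X), (0 : X₀))).1) = 0 ∧ (F ((x : X), (0 : X₀))).2 = 0 := by
    intro x
    have h0 : S.prodMap (ContinuousLinearMap.id ℂ Y₀) (F ((x : X), (0 : X₀))) = 0 := by
      rw [← key]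
      have hx : T (x : X) = 0 := x.2
      simp [Prod.ext_iff, hx]
    exact ⟨by simpa using congrArg Prod.fst h0, by simpa using congrArg Prod.snd h0⟩
  have bwd : ∀ y : LinearMap.ker (S : Y →ₗ[ℂ] Y'),
      T ((F.symm ((y : Y), (0 : Y₀))).1) = 0 ∧ (F.symm ((y : Y), (0 : Y₀))).2 = 0 := by
    intro y
    have h0 : T.prodMap (ContinuousLinearMap.id ℂ X₀) (F.symm ((y : Y), (0 : Y₀))) = 0 := by
      rw [key]
      have hy : S (y : Y) = 0 := y.2
      simp [Prod.ext_iff, hy]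
    exact ⟨by simpa using congrArg Prod.fst h0, by simpa using congrArg Prod.snd h0⟩
  let f : (LinearMap.ker (T : X →ₗ[ℂ] X')) →L[ℂ] (LinearMap.ker (S : Y →ₗ[ℂ] Y')) :=
    ContinuousLinearMap.codRestrict
      ((ContinuousLinearMap.fst ℂ Y Y₀) ∘L (F : (X × X₀) →L[ℂ] (Y × Y₀)) ∘L
        (ContinuousLinearMap.inl ℂ X X₀) ∘L (LinearMap.ker (T : X →ₗ[ℂ] X')).subtypeL)
      (LinearMap.ker (S : Y →ₗ[ℂ] Y')) (fun x => by
        simpa [LinearMap.mem_ker] using (fwd x).1)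
  let g : (LinearMap.ker (S : Y →ₗ[ℂ] Y')) →L[ℂ] (LinearMap.ker (T : X →ₗ[ℂ] X')) :=
    ContinuousLinearMap.codRestrict
      ((ContinuousLinearMap.fst ℂ X X₀) ∘L (F.symm : (Y × Y₀) →L[ℂ] (X × X₀)) ∘L
        (ContinuousLinearMap.inl ℂ Y Y₀) ∘L (LinearMap.ker (S : Y →ₗ[ℂ] Y')).subtypeL)
      (LinearMap.ker (T : X →ₗ[ℂ] X')) (fun y => by
        simpa [LinearMap.mem_ker] using (bwd y).1)
  refine ⟨ContinuousLinearEquiv.equivOfInverse f g ?_ ?_⟩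
  · intro x
    apply Subtype.ext
    show (F.symm (((F ((x : X), (0 : X₀))).1, (0 : Y₀)))).1 = (x : X)
    have h2 := (fwd x).2
    have : ((F ((x : X), (0 : X₀))).1, (0 : Y₀)) = F ((x : X), (0 : X₀)) := by
      rw [Prod.ext_iff]; exact ⟨rfl, h2.symm⟩
    rw [this, F.symm_apply_apply]
  · intro y
    apply Subtype.ext
    show (F (((F.symm ((y : Y), (0 : Y₀))).1, (0 : X₀)))).1 = (y : Y)
    have h2 := (bwd y).2
    have : ((F.symm ((y : Y), (0 : Y₀))).1, (0 : X₀)) = F.symm ((y : Y), (0 : Y₀)) := by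
      rw [Prod.ext_iff]; exact ⟨rfl, h2.symm⟩
    rw [this, F.apply_symm_apply]
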